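/- Characterization of π-regular partitions and the Boolean core: let U be a type and π : Setoid U. Call a setoid τ : Setoid U π-regular if τ = partImp σ π for some setoid σ. Then: (1) τ is π-regular if and only if τ ≤ π as setoids and for all a, b, c, if τ.Rel a b with a ≠ b and π.Rel a c, then τ.Rel a c (i.e., τ is obtained from π by replacing some set of π-blocks by singletons, every non-singleton τ-class being a full π-class); and (2) the set of π-regular setoids, ordered by the reverse of the setoid order (the refinement order on partitions), is order-isomorphic to the powerset of the set of non-singleton π-equivalence classes ordered by inclusion. -/

import Mathlib

/-- The partition implication `σ ⇒ π`: the setoid generated by the relation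
`fun a b => π.Rel a b ∧ ¬ σ.Rel a b`. -/
def partImp {U : Type*} (σ π : Setoid U) : Setoid U :=
  Relation.EqvGen.setoid (fun a b => π.r a b ∧ ¬ σ.r a b)

/-- A setoid `τ` is `π`-regular if it arises as a partition implication `σ ⇒ π`. -/
def IsPiRegular {U : Type*} (π τ : Setoid U) : Prop :=
  ∃ σ : Setoid U, τ = partImp σ π

section Aux

variable {U : Type*}

/-- `a` lies in a `π`-block on which `σ` is not total. -/
def PIBad (σ π : Setoid U) (a : U) : Prop := ∃ x, π.r a x ∧ ¬ σ.r a x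

lemma pibad_symm {σ π : Setoid U} {a b : U} (h : π.r a b) (hs : ¬ σ.r a b) :
    PIBad σ π b :=
  ⟨a, π.symm h, fun hb => hs (σ.symm hb)⟩

lemma eqvGen_cases {σ π : Setoid U} {a b : U}
    (h : Relation.EqvGen (fun a b => π.r a b ∧ ¬ σ.r a b) a b) :
    a = b ∨ (π.r a b ∧ PIBad σ π a ∧ PIBad σ π b) := by
  induction h with
  | rel a b h => exact Or.inr ⟨h.1, ⟨b, h.1, h.2⟩, pibad_symm h.1 h.2⟩
  | refl a => exact Or.inl rfl
  | symm a b _ ih =>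
    rcases ih with rfl | ⟨h1, h2, h3⟩
    · exact Or.inl rfl
    · exact Or.inr ⟨π.symm h1, h3, h2⟩
  | trans a b c _ _ ih1 ih2 =>
    rcases ih1 with rfl | ⟨h1, ha, hb⟩
    · exact ih2
    · rcases ih2 with rfl | ⟨h2, _, hc⟩
      · exact Or.inr ⟨h1, ha, hb⟩
      · exact Or.inr ⟨π.trans h1 h2, ha, hc⟩

lemma partImp_rel_iff {σ π : Setoid U} {a b : U} :
    (partImp σ π).r a b ↔ a = b ∨ (π.r a b ∧ PIBad σ π a) := by
  constructor
  · intro h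
    rcases eqvGen_cases (h : Relation.EqvGen _ a b) with rfl | ⟨h1, h2, _⟩
    · exact Or.inl rfl
    · exact Or.inr ⟨h1, h2⟩
  · intro h
    rcases h with rfl | ⟨hab, hbad⟩
    · exact (partImp σ π).refl a
    · obtain ⟨x, hax, hsx⟩ := hbad
      by_cases hσ : σ.r a b
      · have h1 : Relation.EqvGen (fun a b => π.r a b ∧ ¬ σ.r a b) a x :=
            .rel _ _ ⟨hax, hsx⟩
        have h2 : Relation.EqvGen (fun a b => π.r a b ∧ ¬ σ.r a b) x b :=
            .rel _ _ ⟨π.trans (π.symm hax) hab,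
              fun h => hsx (σ.trans hσ (σ.symm h))⟩
        exact (Relation.EqvGen.trans _ _ _ h1 h2 : Relation.EqvGen _ a b)
      · exact (Relation.EqvGen.rel a b ⟨hab, hσ⟩ :
            Relation.EqvGen (fun a b => π.r a b ∧ ¬ σ.r a b) a b)

/-- `a` lies in a non-singleton `τ`-class. -/
def BadOf {U : Type*} (τ : Setoid U) (a : U) : Prop := ∃ x, τ.r a x ∧ a ≠ x

/-- The candidate witness setoid: `π` restricted to singleton `τ`-blocks. -/
def sigmaOf {U : Type*} (π τ : Setoid U) : Setoid U where
  r a b := a = b ∨ (π.r a b ∧ ¬ BadOf τ a ∧ ¬ BadOf τ b)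
  iseqv := by
    refine ⟨fun a => Or.inl rfl, ?_, ?_⟩
    · rintro a b (rfl | ⟨hab, h1, h2⟩)
      · exact Or.inl rfl
      · exact Or.inr ⟨π.symm hab, h2, h1⟩
    · rintro a b c (rfl | ⟨hab, h1, h2⟩) h3
      · exact h3
      · rcases h3 with rfl | ⟨hbc, _, h4⟩
        · exact Or.inr ⟨hab, h1, h2⟩
        · exact Or.inr ⟨π.trans hab hbc, h1, h4⟩

/-- Part (1) as a standalone lemma. -/
lemma isPiRegular_iff {U : Type*} (π τ : Setoid U) :
    IsPiRegular π τ ↔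
      (τ ≤ π ∧ ∀ a b c, τ.r a b → a ≠ b → π.r a c → τ.r a c) := by
  constructor
  · rintro ⟨σ, rfl⟩
    constructor
    · refine Setoid.le_def.mpr fun {x y} h => ?_
      rcases partImp_rel_iff.mp h with rfl | ⟨h1, _⟩
      · exact π.refl x
      · exact h1
    · intro a b c hab hne hac
      rcases partImp_rel_iff.mp hab with rfl | ⟨_, hbad⟩
      · exact absurd rfl hne
      · exact partImp_rel_iff.mpr (Or.inr ⟨hac, hbad⟩)
  · rintro ⟨hle, hreg⟩
    have badT_of : ∀ {a b : U}, π.r a b → BadOf τ b → BadOf τ a := by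
      rintro a b hab ⟨x, hx, hne⟩
      have hba : τ.r b a := hreg b x a hx hne (π.symm hab)
      by_cases h : a = b
      · exact h ▸ ⟨x, hx, hne⟩
      · exact ⟨b, τ.symm hba, h⟩
    refine ⟨sigmaOf π τ, ?_⟩
    have hbadiff : ∀ x : U, PIBad (sigmaOf π τ) π x ↔ BadOf τ x := by
      intro x
      constructor
      · rintro ⟨y, hxy, hy⟩
        by_cases hbx : BadOf τ x
        · exact hbx
        · by_cases hby : BadOf τ y
          · exact badT_of hxy hby
          · exact absurd (Or.inr ⟨hxy, hbx, hby⟩) hy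
      · rintro ⟨y, hxy, hne⟩
        refine ⟨y, Setoid.le_def.mp hle hxy, ?_⟩
        rintro (rfl | ⟨_, hbx, _⟩)
        · exact hne rfl
        · exact hbx ⟨y, hxy, hne⟩
    refine Setoid.ext fun a b => ?_
    rw [partImp_rel_iff]
    constructor
    · intro h
      by_cases hab : a = b
      · exact Or.inl hab
      · exact Or.inr ⟨Setoid.le_def.mp hle h, (hbadiff a).mpr ⟨b, h, hab⟩⟩
    · rintro (rfl | ⟨hab, hbad⟩)
      · exact τ.refl a
      · rcases (hbadiff a).mp hbad with ⟨x, hx, hne⟩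
        exact hreg a x b hx hne hab

variable (π : Setoid U)

/-- A member of a `π`-class is related to any other member. -/
lemma rel_of_mem_class {C : Set U} (hC : C ∈ π.classes) {a b : U}
    (ha : a ∈ C) (hb : b ∈ C) : π.r a b := by
  rcases hC with ⟨y, rfl⟩
  exact π.trans ha (π.symm hb)

lemma mem_class_of_rel {C : Set U} (hC : C ∈ π.classes) {a b : U}
    (ha : a ∈ C) (hab : π.r a b) : b ∈ C := by
  rcases hC with ⟨y, rfl⟩
  exact π.trans (π.symm hab) ha

/-- The set of non-singleton `π`-classes. -/
abbrev NSClass := {C : Set U // C ∈ π.classes ∧ ∃ x ∈ C, ∃ y ∈ C, x ≠ y}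

/-- Forward map: the set of discretized blocks. -/
def Fmap (τ : Setoid U) : Set (NSClass π) :=
  {C | ∃ a ∈ C.1, ∃ b ∈ C.1, ¬ τ.r a b}

/-- Backward map: keep `π` outside the blocks in `S`, discretize those in `S`. -/
def Gset (S : Set (NSClass π)) : Setoid U where
  r a b := a = b ∨ (π.r a b ∧ ∀ C ∈ S, a ∉ C.1)
  iseqv := by
    refine ⟨fun a => Or.inl rfl, ?_, ?_⟩
    · rintro a b (rfl | ⟨hab, hno⟩)
      · exact Or.inl rfl
      · exact Or.inr ⟨π.symm hab,
          fun C hC hb => hno C hC (mem_class_of_rel π C.2.1 hb (π.symm hab))⟩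
    · rintro a b c (rfl | ⟨hab, hno⟩) h2
      · exact h2
      · rcases h2 with rfl | ⟨hbc, _⟩
        · exact Or.inr ⟨hab, hno⟩
        · exact Or.inr ⟨π.trans hab hbc, hno⟩

lemma Gset_regular (S : Set (NSClass π)) : IsPiRegular π (Gset π S) := by
  rw [isPiRegular_iff]
  constructor
  · refine Setoid.le_def.mpr ?_
    rintro x y (rfl | ⟨h, _⟩)
    · exact π.refl x
    · exact h
  · rintro a b c (rfl | ⟨_, hno⟩) hne hac
    · exact absurd rfl hne
    · by_cases h : a = c
      · exact Or.inl h
      · exact Or.inr ⟨hac, hno⟩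

lemma Gset_antitone {S S' : Set (NSClass π)} (h : S ⊆ S') : Gset π S' ≤ Gset π S := by
  refine Setoid.le_def.mpr ?_
  rintro x y (rfl | ⟨hxy, hno⟩)
  · exact Or.inl rfl
  · exact Or.inr ⟨hxy, fun C hC => hno C (h hC)⟩

lemma Fmap_Gset (S : Set (NSClass π)) : Fmap π (Gset π S) = S := by
  ext C
  constructor
  · rintro ⟨a, ha, b, hb, hrel⟩
    have hab : π.r a b := rel_of_mem_class π C.2.1 ha hb
    by_contra hCS
    refine hrel ?_
    by_cases h : a = b
    · exact Or.inl h
    · refine Or.inr ⟨hab, fun C' hC' haC' => ?_⟩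
      have : C' = C := Subtype.ext (Setoid.eq_of_mem_classes C'.2.1 haC' C.2.1 ha)
      exact hCS (this ▸ hC')
  · intro hCS
    rcases C.2.2 with ⟨x, hx, y, hy, hxy⟩
    refine ⟨x, hx, y, hy, ?_⟩
    rintro (rfl | ⟨_, hno⟩)
    · exact hxy rfl
    · exact hno C hCS hx

lemma Gset_Fmap {τ : Setoid U} (hτ : IsPiRegular π τ) : Gset π (Fmap π τ) = τ := by
  rcases (isPiRegular_iff π τ).mp hτ with ⟨hle, hreg⟩
  refine Setoid.ext fun a b => ?_
  constructor
  · rintro (rfl | ⟨hab, hno⟩)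
    · exact τ.refl a
    · by_cases h : a = b
      · exact h ▸ τ.refl a
      · -- the π-class of a is non-singleton and not discretized
        have hmemb : b ∈ {x | π.r x a} := π.symm hab
        have hC : ({x | π.r x a} : Set U) ∈ π.classes := π.mem_classes a
        have hCn : ∃ x ∈ {x | π.r x a}, ∃ y ∈ ({x | π.r x a} : Set U), x ≠ y :=
          ⟨a, π.refl a, b, hmemb, h⟩
        have hnotin : (⟨{x | π.r x a}, hC, hCn⟩ : NSClass π) ∉ Fmap π τ :=
          fun hmem => hno _ hmem (π.refl a)
        by_contra hτab
        exact hnotin ⟨a, π.refl a, b, hmemb, hτab⟩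
  · intro h
    by_cases hab : a = b
    · exact Or.inl hab
    · refine Or.inr ⟨Setoid.le_def.mp hle h, fun C hC haC => ?_⟩
      rcases hC with ⟨u, hu, v, hv, hrel⟩
      have h1 : τ.r a u := hreg a b u h hab (rel_of_mem_class π C.2.1 haC hu)
      have h2 : τ.r a v := hreg a b v h hab (rel_of_mem_class π C.2.1 haC hv)
      exact hrel (τ.trans (τ.symm h1) h2)

lemma Fmap_le_iff {τ σ : Setoid U} (hτ : IsPiRegular π τ) (hσ : IsPiRegular π σ) :
    Fmap π τ ⊆ Fmap π σ ↔ σ ≤ τ := by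
  constructor
  · intro h
    calc σ = Gset π (Fmap π σ) := (Gset_Fmap π hσ).symm
    _ ≤ Gset π (Fmap π τ) := Gset_antitone π h
    _ = τ := Gset_Fmap π hτ
  · intro h
    rintro C ⟨a, ha, b, hb, hrel⟩
    exact ⟨a, ha, b, hb, fun hs => hrel (Setoid.le_def.mp h hs)⟩

end Aux

/-- **Characterization of `π`-regular partitions and the Boolean core.**
(1) `τ` is `π`-regular iff `τ ≤ π` as setoids and every non-singleton `τ`-class is a
full `π`-class (`τ` is `π` with some blocks discretized); and
(2) the `π`-regular setoids, in the refinement order (the reverse of the setoid order),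
are order-isomorphic to the powerset of the set of non-singleton `π`-classes ordered by
inclusion. -/
theorem piRegular_characterization {U : Type*} (π : Setoid U) :
    (∀ τ : Setoid U, IsPiRegular π τ ↔
        (τ ≤ π ∧ ∀ a b c, τ.r a b → a ≠ b → π.r a c → τ.r a c)) ∧
    Nonempty ((({τ : Setoid U // IsPiRegular π τ})ᵒᵈ) ≃o
        Set {C : Set U // C ∈ π.classes ∧ ∃ x ∈ C, ∃ y ∈ C, x ≠ y}) := by
  refine ⟨fun τ => isPiRegular_iff π τ, ⟨?_⟩⟩
  exact
    { toFun := fun τ => Fmap π (OrderDual.ofDual τ).1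
      invFun := fun S => OrderDual.toDual ⟨Gset π S, Gset_regular π S⟩
      left_inv := fun τ => Subtype.ext (Gset_Fmap π (OrderDual.ofDual τ).2)
      right_inv := fun S => Fmap_Gset π S
      map_rel_iff' := fun {a b} =>
        Fmap_le_iff π (OrderDual.ofDual a).2 (OrderDual.ofDual b).2 }
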